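/- Fix s_j > 0, ρ_j ≥ 1, μ_j ∈ (0,1], ω > 0 and j ∈ {1,2}. Then the sequence of functions φ_n^{(j)}(·,ω,ρ_j,μ_j) : (0,s_j] → ℂ, n ≥ 1, satisfies: (d/ds) φ₁^{(j)}(s,ω,ρ_j,μ_j) = s^{μ_j−1} e^{(−1)^{j+1} iω s^{ρ_j}} for all s ∈ (0,s_j], and for every integer n ≥ 1, (d/ds) φ_{n+1}^{(j)}(s,ω,ρ_j,μ_j) = φ_n^{(j)}(s,ω,ρ_j,μ_j) for all s ∈ (0,s_j]. -/

import Mathlib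

/-!
STATEMENT 16: For fixed s_j > 0, ρ_j ≥ 1, μ_j ∈ (0,1], ω > 0 and j ∈ {1,2}, the sequence
φ_n^{(j)}(·,ω,ρ_j,μ_j) on (0,s_j] satisfies (d/ds) φ₁^{(j)}(s) = s^{μ_j−1} e^{(−1)^{j+1} iω s^{ρ_j}}
and (d/ds) φ_{n+1}^{(j)}(s) = φ_n^{(j)}(s) for every n ≥ 1.
(Here `phiE j n` denotes φ_{n+1}^{(j)}.)
-/
open MeasureTheory

/-- The sign (−1)^{j+1}: +1 for j = 1, −1 for j = 2. -/
noncomputable def esgn (j : ℕ) : ℝ := if j = 1 then 1 else -1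

/-- The unit direction e^{(−1)^{j+1} iπ/(2ρ)} of the half-line Λ^{(j)}. -/
noncomputable def edir (j : ℕ) (ρ : ℝ) : ℂ :=
  Complex.exp ((esgn j * (Real.pi / (2 * ρ)) : ℝ) * Complex.I)

/-- The integrand of φ_{n+1}^{(j)}(s,ω,ρ,μ), parametrizing Λ^{(j)}(s) by z = s + t·e^{(−1)^{j+1}iπ/(2ρ)},
    t ≥ 0 (principal-branch complex powers). -/
noncomputable def phiInt (j n : ℕ) (s ω ρ μ : ℝ) (t : ℝ) : ℂ :=
  (((s : ℂ) + (t : ℂ) * edir j ρ) - (s : ℂ)) ^ n *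
    ((s : ℂ) + (t : ℂ) * edir j ρ) ^ ((μ : ℂ) - 1) *
    Complex.exp ((esgn j : ℂ) * Complex.I * (ω : ℂ) *
      ((s : ℂ) + (t : ℂ) * edir j ρ) ^ (ρ : ℂ)) *
    edir j ρ

/-- φ_{n+1}^{(j)}(s,ω,ρ,μ) := ((−1)^{n+1}/n!) ∫_{Λ^{(j)}(s)} (z−s)^n z^{μ−1} e^{(−1)^{j+1}iωz^ρ} dz. -/
noncomputable def phiE (j n : ℕ) (s ω ρ μ : ℝ) : ℂ :=
  ((-1 : ℂ) ^ (n + 1) / (n.factorial : ℂ)) * ∫ t in Set.Ioi (0 : ℝ), phiInt j n s ω ρ μ t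

namespace S16

open Complex Real Set Filter Topology

noncomputable def Kc (j : ℕ) (ω : ℝ) : ℂ := (esgn j : ℂ) * Complex.I * ω

noncomputable def zz (j : ℕ) (ρ : ℝ) (s t : ℝ) : ℂ := (s : ℂ) + (t : ℂ) * edir j ρ

lemma esgn_cases (j : ℕ) : esgn j = 1 ∨ esgn j = -1 := by
  unfold esgn; split <;> simp

lemma theta_pos {ρ : ℝ} (hρ : 1 ≤ ρ) : 0 < π / (2 * ρ) := by
  have := Real.pi_pos; positivity

lemma theta_le {ρ : ℝ} (hρ : 1 ≤ ρ) : π / (2 * ρ) ≤ π / 2 := by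
  have hπ := Real.pi_pos
  rw [div_le_div_iff₀ (by linarith) (by norm_num)]
  nlinarith

lemma cos_theta_nonneg {ρ : ℝ} (hρ : 1 ≤ ρ) : 0 ≤ Real.cos (π / (2 * ρ)) :=
  Real.cos_nonneg_of_mem_Icc ⟨by linarith [theta_pos hρ, Real.pi_pos], theta_le hρ⟩

lemma sin_theta_ge {ρ : ℝ} (hρ : 1 ≤ ρ) : 1 / ρ ≤ Real.sin (π / (2 * ρ)) := by
  have h := Real.mul_le_sin (theta_pos hρ).le (theta_le hρ)
  have hπ := Real.pi_pos
  have heq : 2 / π * (π / (2 * ρ)) = 1 / ρ := by field_simp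
  rw [← heq]; exact h

lemma sin_theta_le {ρ : ℝ} : Real.sin (π / (2 * ρ)) ≤ 1 := Real.sin_le_one _

lemma edir_re {j : ℕ} {ρ : ℝ} : (edir j ρ).re = Real.cos (π / (2 * ρ)) := by
  rw [edir, Complex.exp_ofReal_mul_I_re]
  rcases esgn_cases j with h | h <;> rw [h] <;> simp

lemma edir_im {j : ℕ} {ρ : ℝ} : (edir j ρ).im = esgn j * Real.sin (π / (2 * ρ)) := by
  rw [edir, Complex.exp_ofReal_mul_I_im]
  rcases esgn_cases j with h | h <;> rw [h] <;> simp

lemma abs_edir {j : ℕ} {ρ : ℝ} : ‖edir j ρ‖ = 1 := by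
  rw [edir, Complex.norm_exp, Complex.mul_I_re, Complex.ofReal_im]
  simp

lemma zz_re {j : ℕ} {ρ s t : ℝ} : (zz j ρ s t).re = s + t * Real.cos (π / (2 * ρ)) := by
  simp [zz, edir_re]

lemma zz_im {j : ℕ} {ρ s t : ℝ} : (zz j ρ s t).im = esgn j * (t * Real.sin (π / (2 * ρ))) := by
  simp [zz, edir_im]; ring

lemma zz_re_pos {j : ℕ} {ρ s t : ℝ} (hρ : 1 ≤ ρ) (hs : 0 < s) (ht : 0 ≤ t) :
    0 < (zz j ρ s t).re := by
  rw [zz_re]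
  have := cos_theta_nonneg hρ
  nlinarith

lemma zz_slit {j : ℕ} {ρ s t : ℝ} (hρ : 1 ≤ ρ) (hs : 0 < s) (ht : 0 ≤ t) :
    zz j ρ s t ∈ Complex.slitPlane :=
  Complex.mem_slitPlane_iff.2 (Or.inl (zz_re_pos hρ hs ht))

lemma zz_ne {j : ℕ} {ρ s t : ℝ} (hρ : 1 ≤ ρ) (hs : 0 < s) (ht : 0 ≤ t) :
    zz j ρ s t ≠ 0 :=
  Complex.slitPlane_ne_zero (zz_slit hρ hs ht)

lemma s_le_abs_zz {j : ℕ} {ρ s t : ℝ} (hρ : 1 ≤ ρ) (hs : 0 < s) (ht : 0 ≤ t) :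
    s ≤ ‖zz j ρ s t‖ := by
  refine le_trans ?_ (Complex.re_le_norm _)
  rw [zz_re]
  nlinarith [cos_theta_nonneg hρ]

lemma t_le_abs_zz {j : ℕ} {ρ s t : ℝ} (hρ : 1 ≤ ρ) (hs : 0 < s) (ht : 0 ≤ t) :
    t ≤ ‖zz j ρ s t‖ := by
  have h2 : t ^ 2 ≤ ‖zz j ρ s t‖ ^ 2 := by
    rw [Complex.sq_norm, Complex.normSq_apply, zz_re, zz_im]
    have hsc := Real.sin_sq_add_cos_sq (π / (2 * ρ))
    have he : esgn j * esgn j = 1 := by rcases esgn_cases j with h | h <;> rw [h] <;> norm_num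
    have hc := cos_theta_nonneg hρ
    have h3 : esgn j * (t * Real.sin (π / (2 * ρ))) * (esgn j * (t * Real.sin (π / (2 * ρ))))
        = t ^ 2 * Real.sin (π / (2 * ρ)) ^ 2 := by
      rw [mul_mul_mul_comm, he, one_mul]; ring
    rw [h3]
    have h4 : t ^ 2 * Real.sin (π / (2 * ρ)) ^ 2 + t ^ 2 * Real.cos (π / (2 * ρ)) ^ 2 = t ^ 2 := by
      linear_combination t ^ 2 * hsc
    nlinarith [h4, sq_nonneg s, mul_nonneg (mul_nonneg hs.le ht) hc, sq_nonneg (t * Real.cos (π / (2 * ρ)))]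
  nlinarith [norm_nonneg (zz j ρ s t)]

lemma abs_zz_le {j : ℕ} {ρ s t : ℝ} (hs : 0 ≤ s) (ht : 0 ≤ t) :
    ‖zz j ρ s t‖ ≤ s + t := by
  refine le_trans (norm_add_le _ _) ?_
  rw [norm_mul, abs_edir, Complex.norm_real, Real.norm_eq_abs, Complex.norm_real, Real.norm_eq_abs]
  rw [_root_.abs_of_nonneg hs, _root_.abs_of_nonneg ht, mul_one]


set_option maxHeartbeats 800000 in
lemma key_im {j : ℕ} {ρ : ℝ} (hρ : 1 ≤ ρ) {a s t : ℝ} (ha : 0 < a) (has : a ≤ s)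
    (ht : 0 ≤ t) : 2 / π * a ^ (ρ - 1) * t ≤ esgn j * ((zz j ρ s t) ^ (ρ : ℂ)).im := by
  have hπ := Real.pi_pos
  have hρ0 : (0 : ℝ) < ρ := by linarith
  have hs : 0 < s := lt_of_lt_of_le ha has
  set θ := π / (2 * ρ) with hθ
  set Z := zz j ρ s t with hZ
  have hZne : Z ≠ 0 := zz_ne hρ hs ht
  set r := ‖Z‖ with hr
  have hrpos : 0 < r := norm_pos_iff.mpr hZne
  have hsθ : 0 < Real.sin θ := lt_of_lt_of_le (by positivity) (sin_theta_ge hρ)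
  have htr : t ≤ r := t_le_abs_zz hρ hs ht
  have har : a ≤ r := le_trans has (s_le_abs_zz hρ hs ht)
  -- the argument
  have hx1 : t * Real.sin θ / r ≤ 1 := by
    rw [div_le_one hrpos]
    nlinarith [sin_theta_le (ρ := ρ)]
  have hx0 : 0 ≤ t * Real.sin θ / r := by positivity
  set φ := Real.arcsin (t * Real.sin θ / r) with hφ
  have hφ0 : 0 ≤ φ := Real.arcsin_nonneg.2 hx0
  have hsinφ : Real.sin φ = t * Real.sin θ / r := Real.sin_arcsin (by linarith) hx1
  have harg : Z.arg = esgn j * φ := by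
    have h1 : Z.arg = Real.arcsin (Z.im / r) := Complex.arg_of_re_nonneg (zz_re_pos hρ hs ht).le
    rw [h1, zz_im]
    rcases esgn_cases j with h | h <;> rw [h]
    · rw [one_mul, one_mul]
    · rw [neg_one_mul, neg_one_mul, neg_div, Real.arcsin_neg]
  have hφθ : φ ≤ θ := by
    have h2 : Real.arcsin (Real.sin θ) = θ :=
      Real.arcsin_sin (by linarith [theta_pos hρ]) (theta_le hρ)
    refine le_trans (Real.monotone_arcsin ?_) (le_of_eq h2)
    rw [div_le_iff₀ hrpos]
    nlinarith
  have hρφ : ρ * φ ≤ π / 2 := by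
    have : ρ * θ = π / 2 := by rw [hθ]; field_simp
    nlinarith
  -- the imaginary part
  have him : (Z ^ (ρ : ℂ)).im = r ^ ρ * Real.sin (ρ * Z.arg) := by
    rw [Complex.cpow_def_of_ne_zero hZne, Complex.exp_im]
    have h1 : (Complex.log Z * (ρ : ℂ)).re = Real.log r * ρ := by
      simp [Complex.mul_re, Complex.log_re, hr]
    have h2 : (Complex.log Z * (ρ : ℂ)).im = Z.arg * ρ := by
      simp [Complex.mul_im, Complex.log_im]
    rw [h1, h2, Real.rpow_def_of_pos hrpos, mul_comm Z.arg ρ]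
  have hsinsgn : esgn j * Real.sin (ρ * Z.arg) = Real.sin (ρ * φ) := by
    rw [harg]
    rcases esgn_cases j with h | h <;> rw [h]
    · rw [one_mul, one_mul]
    · rw [neg_one_mul, neg_one_mul, mul_neg, Real.sin_neg, neg_neg]
  have key : esgn j * (Z ^ (ρ : ℂ)).im = r ^ ρ * Real.sin (ρ * φ) := by
    rw [him, ← hsinsgn]; ring
  rw [key]
  -- the chain of inequalities
  have hsinρφ : 2 / π * (ρ * Real.sin φ) ≤ Real.sin (ρ * φ) := by
    refine le_trans ?_ (Real.mul_le_sin (by positivity) hρφ)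
    have : Real.sin φ ≤ φ := by
      rcases eq_or_lt_of_le hφ0 with h | h
      · rw [← h]; simp
      · exact (Real.sin_lt h).le
    have := mul_le_mul_of_nonneg_left this (by positivity : (0:ℝ) ≤ 2 / π * ρ)
    nlinarith
  have hrρ : r ^ ρ = r ^ (ρ - 1) * r := by
    rw [← Real.rpow_add_one hrpos.ne' (ρ - 1)]; norm_num
  have hrsinφ : r * Real.sin φ = t * Real.sin θ := by
    rw [hsinφ]; field_simp
  have hstep : r ^ (ρ - 1) * (t * Real.sin θ) ≥ a ^ (ρ - 1) * (t * (1 / ρ)) := by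
    have h1 : a ^ (ρ - 1) ≤ r ^ (ρ - 1) := Real.rpow_le_rpow ha.le har (by linarith)
    have h2 : t * (1 / ρ) ≤ t * Real.sin θ := by
      apply mul_le_mul_of_nonneg_left (sin_theta_ge hρ) ht
    have ha1 : (0:ℝ) ≤ a ^ (ρ - 1) := by positivity
    nlinarith [mul_nonneg ht hsθ.le]
  calc 2 / π * a ^ (ρ - 1) * t = 2 / π * ρ * (a ^ (ρ - 1) * (t * (1 / ρ))) := by
        field_simp
    _ ≤ 2 / π * ρ * (r ^ (ρ - 1) * (t * Real.sin θ)) := by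
        have : (0:ℝ) < 2 / π * ρ := by positivity
        nlinarith
    _ = r ^ ρ * (2 / π * (ρ * Real.sin φ)) := by
        rw [hrρ, ← hrsinφ]; ring
    _ ≤ r ^ ρ * Real.sin (ρ * φ) := by
        have : (0:ℝ) ≤ r ^ ρ := by positivity
        nlinarith

lemma abs_Kc {j : ℕ} {ω : ℝ} (hω : 0 ≤ ω) : ‖Kc j ω‖ = ω := by
  rw [Kc, norm_mul, norm_mul, Complex.norm_real, Real.norm_eq_abs, Complex.norm_real, Real.norm_eq_abs, Complex.norm_I]
  rcases esgn_cases j with h | h <;> rw [h] <;> simp [_root_.abs_of_nonneg hω]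

lemma Kc_mul_re {j : ℕ} {ω : ℝ} (W : ℂ) : (Kc j ω * W).re = -(ω * (esgn j * W.im)) := by
  simp [Kc, Complex.mul_re, Complex.mul_im]
  ring

lemma norm_exp_le {j : ℕ} {ρ ω : ℝ} (hρ : 1 ≤ ρ) (hω : 0 < ω) {a s t : ℝ} (ha : 0 < a)
    (has : a ≤ s) (ht : 0 ≤ t) :
    ‖Complex.exp (Kc j ω * (zz j ρ s t) ^ (ρ : ℂ))‖ ≤
      Real.exp (-(2 / π * ω * a ^ (ρ - 1)) * t) := by
  rw [Complex.norm_exp, Kc_mul_re]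
  apply Real.exp_le_exp.2
  have := key_im (j := j) hρ ha has ht
  have hw := mul_le_mul_of_nonneg_left this hω.le
  nlinarith

lemma phiInt_eq {j n : ℕ} {s ω ρ μ t : ℝ} :
    phiInt j n s ω ρ μ t =
      ((t : ℂ) * edir j ρ) ^ n * (zz j ρ s t) ^ ((μ : ℂ) - 1) *
        Complex.exp (Kc j ω * (zz j ρ s t) ^ (ρ : ℂ)) * edir j ρ := by
  rw [phiInt, Kc, zz, add_sub_cancel_left]

/-- The `s`-derivative of the integrand. -/
noncomputable def FF (j n : ℕ) (ω ρ μ : ℝ) (s t : ℝ) : ℂ :=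
  ((t : ℂ) * edir j ρ) ^ n *
    (((μ : ℂ) - 1) * (zz j ρ s t) ^ ((μ : ℂ) - 2) +
      (ρ : ℂ) * Kc j ω * ((zz j ρ s t) ^ ((μ : ℂ) - 1) * (zz j ρ s t) ^ ((ρ : ℂ) - 1))) *
    Complex.exp (Kc j ω * (zz j ρ s t) ^ (ρ : ℂ)) * edir j ρ

lemma abs_cpow_real {z : ℂ} (hz : z ≠ 0) (x : ℝ) :
    ‖z ^ (x : ℂ)‖ = ‖z‖ ^ x := by
  rw [Complex.norm_cpow_of_ne_zero hz]
  simp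

lemma cast_sub_one (x : ℝ) : (x : ℂ) - 1 = ((x - 1 : ℝ) : ℂ) := by push_cast; ring
lemma cast_sub_two (x : ℝ) : (x : ℂ) - 2 = ((x - 2 : ℝ) : ℂ) := by push_cast; ring

lemma norm_phiInt_le {j n : ℕ} {ρ μ ω : ℝ} (hρ : 1 ≤ ρ) (hμ1 : μ ≤ 1) (hω : 0 < ω)
    {a s t : ℝ} (ha : 0 < a) (has : a ≤ s) (ht : 0 ≤ t) :
    ‖phiInt j n s ω ρ μ t‖ ≤
      a ^ (μ - 1) * (t ^ n * Real.exp (-(2 / π * ω * a ^ (ρ - 1)) * t)) := by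
  have hs : 0 < s := lt_of_lt_of_le ha has
  have hZne := zz_ne (j := j) hρ hs ht
  rw [phiInt_eq, norm_mul, norm_mul, norm_mul, abs_edir, mul_one,
    norm_pow, norm_mul, Complex.norm_real, Real.norm_eq_abs, abs_edir, mul_one, _root_.abs_of_nonneg ht]
  have h1 : ‖(zz j ρ s t) ^ ((μ : ℂ) - 1)‖ ≤ a ^ (μ - 1) := by
    rw [cast_sub_one μ, abs_cpow_real hZne]
    exact Real.rpow_le_rpow_of_nonpos ha
      (le_trans has (s_le_abs_zz hρ hs ht)) (by linarith)
  have h2 := norm_exp_le (j := j) hρ hω ha has ht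
  have htn : (0:ℝ) ≤ t ^ n := by positivity
  have hb1 : (0:ℝ) ≤ ‖(zz j ρ s t) ^ ((μ : ℂ) - 1)‖ := norm_nonneg _
  have hb2 : (0:ℝ) ≤ ‖Complex.exp (Kc j ω * (zz j ρ s t) ^ (ρ : ℂ))‖ :=
    norm_nonneg _
  calc t ^ n * ‖(zz j ρ s t) ^ ((μ : ℂ) - 1)‖ *
        ‖Complex.exp (Kc j ω * (zz j ρ s t) ^ (ρ : ℂ))‖
      ≤ t ^ n * (a ^ (μ - 1)) * Real.exp (-(2 / π * ω * a ^ (ρ - 1)) * t) := by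
        apply mul_le_mul (mul_le_mul le_rfl h1 hb1 htn) h2 hb2
        positivity
    _ = a ^ (μ - 1) * (t ^ n * Real.exp (-(2 / π * ω * a ^ (ρ - 1)) * t)) := by ring

lemma norm_FF_le {j n : ℕ} {ρ μ ω : ℝ} (hρ : 1 ≤ ρ) (hμ1 : μ ≤ 1) (hω : 0 < ω)
    {a b s t : ℝ} (ha : 0 < a) (has : a ≤ s) (hsb : s ≤ b) (ht : 0 ≤ t) :
    ‖FF j n ω ρ μ s t‖ ≤
      |μ - 1| * a ^ (μ - 2) * (t ^ n * Real.exp (-(2 / π * ω * a ^ (ρ - 1)) * t)) +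
      ρ * ω * a ^ (μ - 1) *
        (t ^ n * (b + t) ^ (ρ - 1) * Real.exp (-(2 / π * ω * a ^ (ρ - 1)) * t)) := by
  have hs : 0 < s := lt_of_lt_of_le ha has
  have hZne := zz_ne (j := j) hρ hs ht
  have habs := s_le_abs_zz (j := j) hρ hs ht
  have haZ : a ≤ ‖zz j ρ s t‖ := le_trans has habs
  have hb : 0 < b := lt_of_lt_of_le hs hsb
  rw [FF, norm_mul, norm_mul, norm_mul, abs_edir, mul_one,
    norm_pow, norm_mul, Complex.norm_real, Real.norm_eq_abs, abs_edir, mul_one, _root_.abs_of_nonneg ht]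
  have hexp := norm_exp_le (j := j) hρ hω ha has ht
  have hsum : ‖((μ : ℂ) - 1) * (zz j ρ s t) ^ ((μ : ℂ) - 2) +
      (ρ : ℂ) * Kc j ω * ((zz j ρ s t) ^ ((μ : ℂ) - 1) * (zz j ρ s t) ^ ((ρ : ℂ) - 1))‖ ≤
      |μ - 1| * a ^ (μ - 2) + ρ * ω * (a ^ (μ - 1) * (b + t) ^ (ρ - 1)) := by
    refine le_trans (norm_add_le _ _) (add_le_add ?_ ?_)
    · rw [norm_mul, cast_sub_two μ, abs_cpow_real hZne]
      have hcast : ‖(μ : ℂ) - 1‖ = |μ - 1| := by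
        rw [show ((μ : ℂ) - 1) = ((μ - 1 : ℝ) : ℂ) by push_cast; ring, Complex.norm_real, Real.norm_eq_abs]
      rw [hcast]
      apply mul_le_mul le_rfl
        (Real.rpow_le_rpow_of_nonpos ha haZ (by linarith)) (by positivity)
        (abs_nonneg _)
    · rw [norm_mul, norm_mul, norm_mul, Complex.norm_real, Real.norm_eq_abs, abs_Kc hω.le,
        cast_sub_one μ, cast_sub_one ρ, abs_cpow_real hZne, abs_cpow_real hZne, _root_.abs_of_nonneg (by linarith : (0:ℝ) ≤ ρ)]
      have h1 : ‖zz j ρ s t‖ ^ (μ - 1) ≤ a ^ (μ - 1) :=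
        Real.rpow_le_rpow_of_nonpos ha haZ (by linarith)
      have h2 : ‖zz j ρ s t‖ ^ (ρ - 1) ≤ (b + t) ^ (ρ - 1) := by
        apply Real.rpow_le_rpow (norm_nonneg _) _ (by linarith)
        exact le_trans (abs_zz_le hs.le ht) (by linarith)
      have h3 := mul_le_mul h1 h2 (by positivity) (by positivity)
      have := mul_le_mul_of_nonneg_left h3 (show (0:ℝ) ≤ ρ * ω by positivity)
      nlinarith
  have htn : (0:ℝ) ≤ t ^ n := by positivity
  have hA : (0:ℝ) ≤ ‖((μ : ℂ) - 1) * (zz j ρ s t) ^ ((μ : ℂ) - 2) +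
      (ρ : ℂ) * Kc j ω * ((zz j ρ s t) ^ ((μ : ℂ) - 1) * (zz j ρ s t) ^ ((ρ : ℂ) - 1))‖ :=
    norm_nonneg _
  have hE : (0:ℝ) ≤ ‖Complex.exp (Kc j ω * (zz j ρ s t) ^ (ρ : ℂ))‖ :=
    norm_nonneg _
  calc t ^ n * ‖_‖ * ‖_‖
      ≤ t ^ n * (|μ - 1| * a ^ (μ - 2) + ρ * ω * (a ^ (μ - 1) * (b + t) ^ (ρ - 1))) *
        Real.exp (-(2 / π * ω * a ^ (ρ - 1)) * t) := by
        apply mul_le_mul (mul_le_mul le_rfl hsum hA htn) hexp hE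
        positivity
    _ = _ := by ring

open MeasureTheory in
lemma master_int (n : ℕ) {b q c : ℝ} (hb : 0 < b) (hq : 0 ≤ q) (hc : 0 < c) :
    IntegrableOn (fun t : ℝ => t ^ n * (b + t) ^ q * Real.exp (-c * t)) (Ioi 0) := by
  apply integrable_of_isBigO_exp_neg (half_pos hc)
  · intro x hx
    have hbx : (0:ℝ) < b + x := by simp only [mem_Ici] at hx; linarith
    have c1 : ContinuousAt (fun t : ℝ => t ^ n) x := (continuous_pow n).continuousAt
    have c2 : ContinuousAt (fun t : ℝ => (b + t) ^ q) x :=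
      ContinuousAt.rpow_const (continuous_const.add continuous_id).continuousAt (Or.inl hbx.ne')
    have c3 : ContinuousAt (fun t : ℝ => Real.exp (-c * t)) x :=
      (Real.continuous_exp.comp (continuous_const.mul continuous_id)).continuousAt
    exact ((c1.mul c2).mul c3).continuousWithinAt
  · rw [Asymptotics.isBigO_iff]
    refine ⟨1, ?_⟩
    have htend : Tendsto (fun x : ℝ => x ^ n * (b + x) ^ q * Real.exp (-(c/2) * x))
        atTop (𝓝 0) := by
      have hmain := (tendsto_rpow_mul_exp_neg_mul_atTop_nhds_zero ((n : ℝ) + q) (c/2)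
        (half_pos hc)).const_mul ((2:ℝ) ^ q)
      rw [mul_zero] at hmain
      apply squeeze_zero' (g := fun x => (2:ℝ) ^ q * (x ^ ((n:ℝ) + q) * Real.exp (-(c/2) * x)))
      · filter_upwards [eventually_ge_atTop (0:ℝ)] with x hx
        positivity
      · filter_upwards [eventually_ge_atTop (max b 1)] with x hx
        have hx1 : (1:ℝ) ≤ x := le_trans (le_max_right _ _) hx
        have hxb : b ≤ x := le_trans (le_max_left _ _) hx
        have hx0 : (0:ℝ) < x := by linarith
        have h1 : (b + x) ^ q ≤ (2 * x) ^ q :=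
          Real.rpow_le_rpow (by linarith) (by linarith) hq
        have h2 : (2 * x) ^ q = 2 ^ q * x ^ q := Real.mul_rpow (by norm_num) hx0.le
        have h3 : x ^ ((n:ℝ) + q) = x ^ n * x ^ q := by
          rw [Real.rpow_add hx0, Real.rpow_natCast]
        rw [h3]
        have hxn : (0:ℝ) ≤ x ^ n := by positivity
        have hex : (0:ℝ) < Real.exp (-(c/2) * x) := Real.exp_pos _
        calc x ^ n * (b + x) ^ q * Real.exp (-(c/2) * x)
            ≤ x ^ n * (2 ^ q * x ^ q) * Real.exp (-(c/2) * x) := by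
              rw [← h2]; exact mul_le_mul_of_nonneg_right
                (mul_le_mul_of_nonneg_left h1 hxn) hex.le
          _ = 2 ^ q * (x ^ n * x ^ q * Real.exp (-(c/2) * x)) := by ring
      · exact hmain
    filter_upwards [eventually_ge_atTop (0:ℝ),
        htend.eventually (eventually_le_nhds (by norm_num : (0:ℝ) < 1))] with x hx hle
    have h4 : Real.exp (-c * x) = Real.exp (-(c/2) * x) * Real.exp (-(c/2) * x) := by
      rw [← Real.exp_add]; ring_nf
    have hbx : (0:ℝ) < b + x := by linarith
    rw [Real.norm_eq_abs, Real.norm_eq_abs, _root_.abs_of_nonneg (by positivity),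
      _root_.abs_of_nonneg (Real.exp_pos _).le, h4]
    have := mul_le_mul_of_nonneg_right hle (Real.exp_pos (-(c/2) * x)).le
    calc x ^ n * (b + x) ^ q * (Real.exp (-(c/2) * x) * Real.exp (-(c/2) * x))
        = (x ^ n * (b + x) ^ q * Real.exp (-(c/2) * x)) * Real.exp (-(c/2) * x) := by ring
      _ ≤ 1 * Real.exp (-(c/2) * x) := this

open MeasureTheory in
lemma master_int' (n : ℕ) {c : ℝ} (hc : 0 < c) :
    IntegrableOn (fun t : ℝ => t ^ n * Real.exp (-c * t)) (Ioi 0) := by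
  have h := master_int n (b := 1) (q := 0) one_pos le_rfl hc
  simpa [Real.rpow_zero] using h

lemma continuous_zz {j : ℕ} {ρ s : ℝ} : Continuous (fun t : ℝ => zz j ρ s t) := by
  unfold zz
  exact continuous_const.add (Complex.continuous_ofReal.mul continuous_const)

lemma contAt_cpow {j : ℕ} {ρ s : ℝ} (hρ : 1 ≤ ρ) (hs : 0 < s) {t : ℝ} (ht : 0 ≤ t) (w : ℂ) :
    ContinuousAt (fun t : ℝ => (zz j ρ s t) ^ w) t :=
  ContinuousAt.cpow continuous_zz.continuousAt continuousAt_const (zz_slit hρ hs ht)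

lemma contAt_phiInt {j n : ℕ} {ρ μ ω s : ℝ} (hρ : 1 ≤ ρ) (hs : 0 < s) {t : ℝ} (ht : 0 ≤ t) :
    ContinuousAt (fun t : ℝ => phiInt j n s ω ρ μ t) t := by
  have heq : (fun t : ℝ => phiInt j n s ω ρ μ t) = fun t : ℝ =>
      ((t : ℂ) * edir j ρ) ^ n * (zz j ρ s t) ^ ((μ : ℂ) - 1) *
        Complex.exp (Kc j ω * (zz j ρ s t) ^ (ρ : ℂ)) * edir j ρ := funext fun _ => phiInt_eq
  rw [heq]
  exact ((((Complex.continuous_ofReal.mul continuous_const).pow n).continuousAt.mul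
    (contAt_cpow hρ hs ht _)).mul
    ((Complex.continuous_exp.continuousAt.comp
      ((continuousAt_const.mul (contAt_cpow hρ hs ht _)))))).mul continuousAt_const

lemma contAt_FF {j n : ℕ} {ρ μ ω s : ℝ} (hρ : 1 ≤ ρ) (hs : 0 < s) {t : ℝ} (ht : 0 ≤ t) :
    ContinuousAt (fun t : ℝ => FF j n ω ρ μ s t) t := by
  unfold FF
  exact ((((Complex.continuous_ofReal.mul continuous_const).pow n).continuousAt.mul
    ((continuousAt_const.mul (contAt_cpow hρ hs ht _)).add
      (continuousAt_const.mul ((contAt_cpow hρ hs ht _).mul (contAt_cpow hρ hs ht _))))).mul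
    ((Complex.continuous_exp.continuousAt.comp
      ((continuousAt_const.mul (contAt_cpow hρ hs ht _)))))).mul continuousAt_const

/-- derivative of the integrand in `s`. -/
lemma hasDerivAt_s {j n : ℕ} {ρ μ ω : ℝ} (hρ : 1 ≤ ρ) {s t : ℝ} (hs : 0 < s) (ht : 0 ≤ t) :
    HasDerivAt (fun s' : ℝ => phiInt j n s' ω ρ μ t) (FF j n ω ρ μ s t) s := by
  have heq : (fun s' : ℝ => phiInt j n s' ω ρ μ t) = fun s' : ℝ =>
      (fun w : ℂ => ((t : ℂ) * edir j ρ) ^ n * (w + (t : ℂ) * edir j ρ) ^ ((μ : ℂ) - 1) *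
        Complex.exp (Kc j ω * (w + (t : ℂ) * edir j ρ) ^ (ρ : ℂ)) * edir j ρ) (s' : ℂ) := by
    funext s'
    simp only [phiInt_eq, zz]
  rw [heq]
  have hz : HasDerivAt (fun w : ℂ => w + (t : ℂ) * edir j ρ) 1 (s : ℂ) :=
    (hasDerivAt_id _).add_const _
  have hslit : ((s : ℂ) + (t : ℂ) * edir j ρ) ∈ Complex.slitPlane := zz_slit hρ hs ht
  have h1 : HasDerivAt (fun w : ℂ => (w + (t : ℂ) * edir j ρ) ^ ((μ : ℂ) - 1))
      (((μ : ℂ) - 1) * ((s : ℂ) + (t : ℂ) * edir j ρ) ^ ((μ : ℂ) - 1 - 1) * 1) (s : ℂ) :=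
    hz.cpow_const hslit
  have h2 : HasDerivAt (fun w : ℂ =>
      Complex.exp (Kc j ω * (w + (t : ℂ) * edir j ρ) ^ (ρ : ℂ)))
      (Complex.exp (Kc j ω * ((s : ℂ) + (t : ℂ) * edir j ρ) ^ (ρ : ℂ)) *
        (Kc j ω * ((ρ : ℂ) * ((s : ℂ) + (t : ℂ) * edir j ρ) ^ ((ρ : ℂ) - 1) * 1))) (s : ℂ) :=
    ((hz.cpow_const hslit).const_mul (Kc j ω)).cexp
  have h3 := (((h1.const_mul (((t : ℂ) * edir j ρ) ^ n)).mul h2).mul_const (edir j ρ)).comp_ofReal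
  convert h3 using 1
  · rfl
  rw [FF]
  have hexp : (μ : ℂ) - 1 - 1 = (μ : ℂ) - 2 := by ring
  rw [← hexp]
  unfold zz
  ring

/-- derivative of the integrand in `t`. -/
lemma hasDerivAt_t {j n : ℕ} {ρ μ ω : ℝ} (hρ : 1 ≤ ρ) {s t : ℝ} (hs : 0 < s) (ht : 0 ≤ t) :
    HasDerivAt (fun t' : ℝ => phiInt j n s ω ρ μ t')
      ((n : ℂ) * edir j ρ * phiInt j (n - 1) s ω ρ μ t + edir j ρ * FF j n ω ρ μ s t) t := by
  have heq : (fun t' : ℝ => phiInt j n s ω ρ μ t') = fun t' : ℝ =>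
      (fun w : ℂ => (w * edir j ρ) ^ n * ((s : ℂ) + w * edir j ρ) ^ ((μ : ℂ) - 1) *
        Complex.exp (Kc j ω * ((s : ℂ) + w * edir j ρ) ^ (ρ : ℂ)) * edir j ρ) (t' : ℂ) := by
    funext t'
    simp only [phiInt_eq, zz]
  rw [heq]
  have hz : HasDerivAt (fun w : ℂ => (s : ℂ) + w * edir j ρ) (1 * edir j ρ) (t : ℂ) :=
    ((hasDerivAt_id _).mul_const _).const_add _
  have hslit : ((s : ℂ) + (t : ℂ) * edir j ρ) ∈ Complex.slitPlane := zz_slit hρ hs ht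
  have hpow : HasDerivAt (fun w : ℂ => (w * edir j ρ) ^ n)
      ((n : ℂ) * ((t : ℂ) * edir j ρ) ^ (n - 1) * (1 * edir j ρ)) (t : ℂ) :=
    ((hasDerivAt_id _).mul_const _).pow n
  have h1 : HasDerivAt (fun w : ℂ => ((s : ℂ) + w * edir j ρ) ^ ((μ : ℂ) - 1))
      (((μ : ℂ) - 1) * ((s : ℂ) + (t : ℂ) * edir j ρ) ^ ((μ : ℂ) - 1 - 1) * (1 * edir j ρ))
      (t : ℂ) := hz.cpow_const hslit
  have h2 : HasDerivAt (fun w : ℂ =>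
      Complex.exp (Kc j ω * ((s : ℂ) + w * edir j ρ) ^ (ρ : ℂ)))
      (Complex.exp (Kc j ω * ((s : ℂ) + (t : ℂ) * edir j ρ) ^ (ρ : ℂ)) *
        (Kc j ω * ((ρ : ℂ) * ((s : ℂ) + (t : ℂ) * edir j ρ) ^ ((ρ : ℂ) - 1) * (1 * edir j ρ))))
      (t : ℂ) := ((hz.cpow_const hslit).const_mul (Kc j ω)).cexp
  have h3 := (((hpow.mul h1).mul h2).mul_const (edir j ρ)).comp_ofReal
  convert h3 using 1
  · rfl
  rw [FF, phiInt_eq]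
  have hexp : (μ : ℂ) - 1 - 1 = (μ : ℂ) - 2 := by ring
  rw [← hexp]
  simp only [Pi.mul_apply]
  unfold zz
  ring

open MeasureTheory in
lemma aesm_phiInt {j n : ℕ} {ρ μ ω s : ℝ} (hρ : 1 ≤ ρ) (hs : 0 < s) :
    AEStronglyMeasurable (fun t => phiInt j n s ω ρ μ t) (volume.restrict (Ioi (0:ℝ))) := by
  apply ContinuousOn.aestronglyMeasurable _ measurableSet_Ioi
  intro t htm
  exact (contAt_phiInt hρ hs (le_of_lt htm)).continuousWithinAt

open MeasureTheory in
lemma aesm_FF {j n : ℕ} {ρ μ ω s : ℝ} (hρ : 1 ≤ ρ) (hs : 0 < s) :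
    AEStronglyMeasurable (fun t => FF j n ω ρ μ s t) (volume.restrict (Ioi (0:ℝ))) := by
  apply ContinuousOn.aestronglyMeasurable _ measurableSet_Ioi
  intro t htm
  exact (contAt_FF hρ hs (le_of_lt htm)).continuousWithinAt

lemma c_pos {ρ ω a : ℝ} (hω : 0 < ω) (ha : 0 < a) : 0 < 2 / π * ω * a ^ (ρ - 1) := by
  have := Real.pi_pos; positivity

open MeasureTheory in
lemma int_phiInt {j n : ℕ} {ρ μ ω : ℝ} (hρ : 1 ≤ ρ) (hμ1 : μ ≤ 1) (hω : 0 < ω)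
    {s : ℝ} (hs : 0 < s) :
    IntegrableOn (fun t => phiInt j n s ω ρ μ t) (Ioi (0:ℝ)) := by
  apply Integrable.mono'
    ((master_int' n (c_pos hω hs (ρ := ρ))).const_mul (s ^ (μ - 1)))
    (aesm_phiInt hρ hs)
  filter_upwards [ae_restrict_mem measurableSet_Ioi] with t htm
  exact norm_phiInt_le hρ hμ1 hω hs le_rfl (le_of_lt htm)

open MeasureTheory in
lemma tendsto_phiInt {j n : ℕ} {ρ μ ω : ℝ} (hρ : 1 ≤ ρ) (hμ1 : μ ≤ 1) (hω : 0 < ω)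
    {s : ℝ} (hs : 0 < s) :
    Tendsto (fun t => phiInt j n s ω ρ μ t) atTop (𝓝 0) := by
  apply squeeze_zero_norm' (a := fun t =>
    s ^ (μ - 1) * (t ^ ((n:ℝ)) * Real.exp (-(2 / π * ω * s ^ (ρ - 1)) * t)))
  · filter_upwards [eventually_ge_atTop (0:ℝ)] with t htm
    have h := norm_phiInt_le (j := j) (n := n) hρ hμ1 hω hs le_rfl htm
    rwa [← Real.rpow_natCast t n] at h
  · have := (tendsto_rpow_mul_exp_neg_mul_atTop_nhds_zero (n:ℝ)
      (2 / π * ω * s ^ (ρ - 1)) (c_pos hω hs)).const_mul (s ^ (μ - 1))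
    simpa using this

open MeasureTheory in
lemma main_deriv {j n : ℕ} {ρ μ ω : ℝ} (hρ : 1 ≤ ρ) (hμ1 : μ ≤ 1) (hω : 0 < ω)
    {s₀ : ℝ} (hs₀ : 0 < s₀) :
    IntegrableOn (fun t => FF j n ω ρ μ s₀ t) (Ioi (0:ℝ)) ∧
      HasDerivAt (fun s : ℝ => ∫ t in Ioi (0:ℝ), phiInt j n s ω ρ μ t)
        (∫ t in Ioi (0:ℝ), FF j n ω ρ μ s₀ t) s₀ := by
  have ha : (0:ℝ) < s₀ / 2 := by linarith
  set c := 2 / π * ω * (s₀ / 2) ^ (ρ - 1) with hc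
  have hcpos : 0 < c := c_pos hω ha
  have hball : ∀ s ∈ Metric.ball s₀ (s₀ / 2), s₀ / 2 ≤ s ∧ s ≤ 2 * s₀ := by
    intro s hsb
    rw [Metric.mem_ball, Real.dist_eq, abs_lt] at hsb
    constructor <;> linarith [hsb.1, hsb.2]
  have key := hasDerivAt_integral_of_dominated_loc_of_deriv_le
    (F := fun s t => phiInt j n s ω ρ μ t) (F' := fun s t => FF j n ω ρ μ s t)
    (x₀ := s₀)
    (bound := fun t => |μ - 1| * (s₀/2) ^ (μ - 2) * (t ^ n * Real.exp (-c * t)) +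
      ρ * ω * (s₀/2) ^ (μ - 1) *
        (t ^ n * (2 * s₀ + t) ^ (ρ - 1) * Real.exp (-c * t)))
    (μ := volume.restrict (Ioi (0:ℝ))) (Metric.ball_mem_nhds s₀ ha) ?_ ?_ ?_ ?_ ?_ ?_
  · exact key
  · filter_upwards [Metric.ball_mem_nhds s₀ ha] with s hsb
    exact aesm_phiInt hρ (lt_of_lt_of_le ha (hball s hsb).1)
  · exact int_phiInt hρ hμ1 hω hs₀
  · exact aesm_FF hρ hs₀
  · filter_upwards [ae_restrict_mem measurableSet_Ioi] with t htm s hsb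
    have h := norm_FF_le (j := j) (n := n) hρ hμ1 hω ha (hball s hsb).1 (hball s hsb).2
      (le_of_lt htm)
    calc ‖FF j n ω ρ μ s t‖ ≤ _ := h
      _ = _ := by rw [hc]
  · apply Integrable.add
    · exact ((master_int' n hcpos).const_mul _)
    · have h := master_int n (b := 2 * s₀) (q := ρ - 1) (by linarith) (by linarith) hcpos
      exact h.const_mul _
  · filter_upwards [ae_restrict_mem measurableSet_Ioi] with t htm s hsb
    exact hasDerivAt_s hρ (lt_of_lt_of_le ha (hball s hsb).1) (le_of_lt htm)

lemma edir_ne {j : ℕ} {ρ : ℝ} : edir j ρ ≠ 0 := Complex.exp_ne_zero _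

open MeasureTheory in
lemma integral_FF_eq {j n : ℕ} {ρ μ ω : ℝ} (hρ : 1 ≤ ρ) (hμ1 : μ ≤ 1) (hω : 0 < ω)
    {s₀ : ℝ} (hs₀ : 0 < s₀) :
    ∫ t in Ioi (0:ℝ), FF j n ω ρ μ s₀ t =
      -(edir j ρ)⁻¹ * phiInt j n s₀ ω ρ μ 0 -
        (n : ℂ) * ∫ t in Ioi (0:ℝ), phiInt j (n - 1) s₀ ω ρ μ t := by
  have hFFint := (main_deriv (j := j) (n := n) hρ hμ1 hω hs₀).1
  have hint1 : IntegrableOn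
      (fun t => (n : ℂ) * edir j ρ * phiInt j (n - 1) s₀ ω ρ μ t) (Ioi (0:ℝ)) :=
    (int_phiInt hρ hμ1 hω hs₀).const_mul _
  have hint2 : IntegrableOn (fun t => edir j ρ * FF j n ω ρ μ s₀ t) (Ioi (0:ℝ)) :=
    hFFint.const_mul _
  have hftc := integral_Ioi_of_hasDerivAt_of_tendsto
    (f := fun t => phiInt j n s₀ ω ρ μ t)
    (f' := fun t => (n : ℂ) * edir j ρ * phiInt j (n - 1) s₀ ω ρ μ t +
      edir j ρ * FF j n ω ρ μ s₀ t) (a := 0) (m := 0)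
    (contAt_phiInt hρ hs₀ le_rfl).continuousWithinAt
    (fun x hx => hasDerivAt_t hρ hs₀ (le_of_lt hx))
    (hint1.add hint2)
    (tendsto_phiInt hρ hμ1 hω hs₀)
  rw [integral_add hint1 hint2, integral_const_mul, integral_const_mul, zero_sub] at hftc
  have hE : edir j ρ ≠ 0 := edir_ne
  apply mul_left_cancel₀ hE
  have h2 : edir j ρ * (-(edir j ρ)⁻¹ * phiInt j n s₀ ω ρ μ 0 -
      (n : ℂ) * ∫ t in Ioi (0:ℝ), phiInt j (n - 1) s₀ ω ρ μ t) =
      -phiInt j n s₀ ω ρ μ 0 -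
        (n : ℂ) * edir j ρ * ∫ t in Ioi (0:ℝ), phiInt j (n - 1) s₀ ω ρ μ t := by
    field_simp
  rw [h2]
  linear_combination hftc

lemma phiInt_at_zero {j n : ℕ} {ρ μ ω s : ℝ} :
    phiInt j n s ω ρ μ 0 =
      (0 : ℂ) ^ n * ((s : ℂ) ^ ((μ : ℂ) - 1) *
        Complex.exp (Kc j ω * (s : ℂ) ^ (ρ : ℂ)) * edir j ρ) := by
  rw [phiInt_eq]
  have h0 : zz j ρ s 0 = (s : ℂ) := by simp [zz]
  rw [h0]
  simp
  ring

lemma coeff_eq {m : ℕ} :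
    ((-1 : ℂ)) ^ (m + 1 + 1) / ((m + 1).factorial : ℂ) * (-((m : ℂ) + 1)) =
      (-1 : ℂ) ^ (m + 1) / (m.factorial : ℂ) := by
  have h1 : (((m + 1).factorial : ℕ) : ℂ) = ((m : ℂ) + 1) * (m.factorial : ℂ) := by
    rw [Nat.factorial_succ]; push_cast; ring
  have h2 : (m.factorial : ℂ) ≠ 0 := Nat.cast_ne_zero.2 (Nat.factorial_ne_zero m)
  have h3 : ((m : ℂ) + 1) ≠ 0 := Nat.cast_add_one_ne_zero m
  rw [h1]
  field_simp
  ring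

end S16

theorem statement16 (sj ρ μ ω : ℝ) (hsj : 0 < sj) (hρ : 1 ≤ ρ)
    (hμ : μ ∈ Set.Ioc (0 : ℝ) 1) (hω : 0 < ω) (j : ℕ) (hj : j = 1 ∨ j = 2) :
    (∀ s ∈ Set.Ioc (0 : ℝ) sj,
      HasDerivAt (fun s' : ℝ => phiE j 0 s' ω ρ μ)
        (((s ^ (μ - 1) : ℝ) : ℂ) *
          Complex.exp ((esgn j : ℂ) * Complex.I * (ω : ℂ) * ((s : ℂ) ^ (ρ : ℂ)))) s) ∧
    (∀ n : ℕ, 1 ≤ n → ∀ s ∈ Set.Ioc (0 : ℝ) sj,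
      HasDerivAt (fun s' : ℝ => phiE j n s' ω ρ μ) (phiE j (n - 1) s ω ρ μ) s) := by
  constructor
  · intro s hsm
    have hs : 0 < s := hsm.1
    have hmain := (S16.main_deriv (j := j) (n := 0) hρ hμ.2 hω hs).2
    have hd := hmain.const_mul ((-1 : ℂ) ^ (0 + 1) / ((Nat.factorial 0 : ℕ) : ℂ))
    have heval : ((-1 : ℂ) ^ (0 + 1) / ((Nat.factorial 0 : ℕ) : ℂ)) *
        ∫ t in Set.Ioi (0:ℝ), S16.FF j 0 ω ρ μ s t =
        ((s ^ (μ - 1) : ℝ) : ℂ) *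
          Complex.exp ((esgn j : ℂ) * Complex.I * (ω : ℂ) * ((s : ℂ) ^ (ρ : ℂ))) := by
      rw [S16.integral_FF_eq hρ hμ.2 hω hs, S16.phiInt_at_zero]
      have hE : edir j ρ ≠ 0 := S16.edir_ne
      have hcast : ((s ^ (μ - 1) : ℝ) : ℂ) = (s : ℂ) ^ ((μ : ℂ) - 1) := by
        rw [Complex.ofReal_cpow hs.le]
        push_cast
        ring_nf
      rw [hcast]
      have hK : S16.Kc j ω = (esgn j : ℂ) * Complex.I * (ω : ℂ) := rfl
      rw [← hK]
      simp only [pow_zero, one_mul, Nat.cast_zero, zero_mul, sub_zero, Nat.factorial_zero,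
        Nat.cast_one, pow_one]
      field_simp
      ring
    rw [heval] at hd
    exact hd
  · intro n hn s hsm
    have hs : 0 < s := hsm.1
    obtain ⟨m, rfl⟩ : ∃ m, n = m + 1 := ⟨n - 1, (Nat.succ_pred_eq_of_pos hn).symm⟩
    have hmain := (S16.main_deriv (j := j) (n := m + 1) hρ hμ.2 hω hs).2
    have hd := hmain.const_mul ((-1 : ℂ) ^ (m + 1 + 1) / (((m + 1).factorial : ℕ) : ℂ))
    have heval : ((-1 : ℂ) ^ (m + 1 + 1) / (((m + 1).factorial : ℕ) : ℂ)) *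
        ∫ t in Set.Ioi (0:ℝ), S16.FF j (m + 1) ω ρ μ s t = phiE j (m + 1 - 1) s ω ρ μ := by
      rw [S16.integral_FF_eq hρ hμ.2 hω hs, S16.phiInt_at_zero]
      simp only [Nat.add_sub_cancel]
      rw [phiE]
      have h0 : ((0 : ℂ)) ^ (m + 1) = 0 := by simp
      rw [h0, zero_mul, mul_zero]
      have hc := S16.coeff_eq (m := m)
      push_cast at hc ⊢
      linear_combination (∫ t in Set.Ioi (0:ℝ), phiInt j m s ω ρ μ t) * hc
    rw [heval] at hd
    exact hd
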